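/- Let u_{ijt} be independent mean-zero random variables bounded by 1 in absolute value, indexed by i,j ∈ {1,…,N}, t ∈ {1,…,T}. Define S = Σ_{i=1}^N Σ_{j=1}^N Σ_{t=1}^T (Σ_{i'=1}^N u_{i'jt})(Σ_{j'=1}^N u_{ij't}). Then E[S²] ≤ C·N⁴T² for a universal constant C, hence S = O_P(N²T). -/

import Mathlib

open MeasureTheory ProbabilityTheory

/-- Pattern lemma: if each of the four coordinates equals some other coordinate,
then the tuple splits into two pairs. -/
lemma pair_pattern {α : Type} {a b c d : α} (ha : a=b ∨ a=c ∨ a=d)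
    (hb : b=a ∨ b=c ∨ b=d) (hc : c=a ∨ c=b ∨ c=d) (hd : d=a ∨ d=b ∨ d=c) :
    (a=b∧c=d)∨(a=c∧b=d)∨(a=d∧b=c) := by
  rcases ha with rfl|rfl|rfl <;> aesop

lemma abs_mul4_le_one {x y z w : ℝ} (hx : |x| ≤ 1) (hy : |y| ≤ 1)
    (hz : |z| ≤ 1) (hw : |w| ≤ 1) : |x * y * z * w| ≤ 1 := by
  calc |x * y * z * w| = |x| * |y| * |z| * |w| := by simp [abs_mul]
    _ ≤ 1 * 1 * 1 * 1 := by gcongr <;> positivity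
    _ = 1 := by norm_num

lemma abs_mul3_le_one {y z w : ℝ} (hy : |y| ≤ 1) (hz : |z| ≤ 1) (hw : |w| ≤ 1) :
    |y * z * w| ≤ 1 := by
  calc |y * z * w| = |y| * |z| * |w| := by simp [abs_mul]
    _ ≤ 1 * 1 * 1 := by gcongr <;> positivity
    _ = 1 := by norm_num

lemma bdd_integrable {Ω : Type} [MeasurableSpace Ω] {μ : Measure Ω} [IsProbabilityMeasure μ]
    {f : Ω → ℝ} {c : ℝ} (hm : Measurable f) (hb : ∀ᵐ ω ∂μ, |f ω| ≤ c) :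
    Integrable f μ := by
  refine (integrable_const c).mono' hm.aestronglyMeasurable ?_
  filter_upwards [hb] with ω h using by simpa [Real.norm_eq_abs] using h

/-- If `a` differs from `b, c, d`, the expectation of the product vanishes. -/
lemma indep_prod4_zero {Ω : Type} [MeasurableSpace Ω] {μ : Measure Ω} [IsProbabilityMeasure μ]
    {κ : Type} {f : κ → Ω → ℝ}
    (hmeas : ∀ k, Measurable (f k))
    (hindep : iIndepFun f μ)
    (hzero : ∀ k, ∫ ω, f k ω ∂μ = 0)
    (hbdd : ∀ k, ∀ᵐ ω ∂μ, |f k ω| ≤ 1)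
    {a b c d : κ} (hab : a ≠ b) (hac : a ≠ c) (had : a ≠ d) :
    ∫ ω, f a ω * f b ω * f c ω * f d ω ∂μ = 0 := by
  classical
  have hdisj : Disjoint ({a} : Finset κ) ({b, c, d} : Finset κ) := by
    simp [Finset.disjoint_left, hab, hac, had]
  have h := hindep.indepFun_finset {a} {b, c, d} hdisj hmeas
  have hbm : b ∈ ({b, c, d} : Finset κ) := by simp
  have hcm : c ∈ ({b, c, d} : Finset κ) := by simp
  have hdm : d ∈ ({b, c, d} : Finset κ) := by simp
  have ham : a ∈ ({a} : Finset κ) := by simp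
  set φ : (({a} : Finset κ) → ℝ) → ℝ := fun v => v ⟨a, ham⟩ with hφ
  set ψ : (({b, c, d} : Finset κ) → ℝ) → ℝ :=
    fun v => v ⟨b, hbm⟩ * v ⟨c, hcm⟩ * v ⟨d, hdm⟩ with hψ
  have hφm : Measurable φ := by fun_prop
  have hψm : Measurable ψ := by fun_prop
  have h2 : IndepFun (f a) (fun ω => f b ω * f c ω * f d ω) μ := h.comp hφm hψm
  have hIa : Integrable (f a) μ := bdd_integrable (hmeas a) (hbdd a)
  have hIbcd : Integrable (fun ω => f b ω * f c ω * f d ω) μ := by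
    refine bdd_integrable (c := 1) (((hmeas b).mul (hmeas c)).mul (hmeas d)) ?_
    filter_upwards [hbdd b, hbdd c, hbdd d] with ω h1 h2 h3
    exact abs_mul3_le_one h1 h2 h3
  have key : ∫ ω, f a ω * (f b ω * f c ω * f d ω) ∂μ
      = (∫ ω, f a ω ∂μ) * ∫ ω, f b ω * f c ω * f d ω ∂μ :=
    h2.integral_fun_mul_eq_mul_integral hIa.aestronglyMeasurable hIbcd.aestronglyMeasurable
  have : (fun ω => f a ω * f b ω * f c ω * f d ω)
      = fun ω => f a ω * (f b ω * f c ω * f d ω) := by funext ω; ring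
  rw [this, key, hzero a, zero_mul]

/-- Fourth moment bound for sums of independent, mean-zero, bounded variables. -/
lemma fourth_moment {Ω : Type} [MeasurableSpace Ω] {μ : Measure Ω} [IsProbabilityMeasure μ]
    {κ : Type} [Fintype κ] {f : κ → Ω → ℝ}
    (hmeas : ∀ k, Measurable (f k))
    (hbdd : ∀ k, ∀ᵐ ω ∂μ, |f k ω| ≤ 1)
    (hE0 : ∀ a b c d : κ, a ≠ b → a ≠ c → a ≠ d →
      ∫ ω, f a ω * f b ω * f c ω * f d ω ∂μ = 0) :
    ∫ ω, (∑ k, f k ω)^4 ∂μ ≤ 3 * (Fintype.card κ : ℝ)^2 := by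
  classical
  set g : κ×κ×κ×κ → Ω → ℝ :=
    fun p ω => f p.1 ω * f p.2.1 ω * f p.2.2.1 ω * f p.2.2.2 ω with hg
  have hgbdd : ∀ p, ∀ᵐ ω ∂μ, |g p ω| ≤ 1 := by
    intro p
    filter_upwards [hbdd p.1, hbdd p.2.1, hbdd p.2.2.1, hbdd p.2.2.2] with ω h1 h2 h3 h4
    exact abs_mul4_le_one h1 h2 h3 h4
  have hgm : ∀ p, Measurable (g p) :=
    fun p => (((hmeas _).mul (hmeas _)).mul (hmeas _)).mul (hmeas _)
  have hgint : ∀ p, Integrable (g p) μ := fun p => bdd_integrable (hgm p) (hgbdd p)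
  have expand : (fun ω => (∑ k, f k ω)^4) = fun ω => ∑ p : κ×κ×κ×κ, g p ω := by
    funext ω
    simp only [pow_succ, pow_zero, one_mul, Finset.sum_mul, Finset.mul_sum,
      Fintype.sum_prod_type, hg]
    refine Finset.sum_congr rfl fun a _ => Finset.sum_congr rfl fun b _ =>
      Finset.sum_congr rfl fun c _ => Finset.sum_congr rfl fun d _ => by ring
  rw [expand, integral_finset_sum _ (fun p _ => hgint p)]
  set Good : κ×κ×κ×κ → Prop := fun p =>
    (p.1 = p.2.1 ∧ p.2.2.1 = p.2.2.2) ∨ (p.1 = p.2.2.1 ∧ p.2.1 = p.2.2.2) ∨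
    (p.1 = p.2.2.2 ∧ p.2.1 = p.2.2.1) with hGood
  have hzero' : ∀ p : κ×κ×κ×κ, ¬ Good p → ∫ ω, g p ω ∂μ = 0 := by
    rintro ⟨a, b, c, d⟩ hp
    simp only [hGood] at hp
    by_contra hne
    -- derive that every coordinate equals another one
    have ha : a = b ∨ a = c ∨ a = d := by
      by_contra h; push_neg at h
      exact hne (hE0 a b c d h.1 h.2.1 h.2.2)
    have hb : b = a ∨ b = c ∨ b = d := by
      by_contra h; push_neg at h
      refine hne ?_
      have : (fun ω => g (a,b,c,d) ω) = fun ω => f b ω * f a ω * f c ω * f d ω := by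
        funext ω; simp only [hg]; ring
      rw [show (∫ ω, g (a,b,c,d) ω ∂μ) = ∫ ω, f b ω * f a ω * f c ω * f d ω ∂μ by
        rw [← this]]
      exact hE0 b a c d h.1 h.2.1 h.2.2
    have hc : c = a ∨ c = b ∨ c = d := by
      by_contra h; push_neg at h
      refine hne ?_
      have : (fun ω => g (a,b,c,d) ω) = fun ω => f c ω * f a ω * f b ω * f d ω := by
        funext ω; simp only [hg]; ring
      rw [show (∫ ω, g (a,b,c,d) ω ∂μ) = ∫ ω, f c ω * f a ω * f b ω * f d ω ∂μ by
        rw [← this]]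
      exact hE0 c a b d h.1 h.2.1 h.2.2
    have hd : d = a ∨ d = b ∨ d = c := by
      by_contra h; push_neg at h
      refine hne ?_
      have : (fun ω => g (a,b,c,d) ω) = fun ω => f d ω * f a ω * f b ω * f c ω := by
        funext ω; simp only [hg]; ring
      rw [show (∫ ω, g (a,b,c,d) ω ∂μ) = ∫ ω, f d ω * f a ω * f b ω * f c ω ∂μ by
        rw [← this]]
      exact hE0 d a b c h.1 h.2.1 h.2.2
    exact hp (pair_pattern ha hb hc hd)
  have hle1 : ∀ p : κ×κ×κ×κ, ∫ ω, g p ω ∂μ ≤ 1 := by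
    intro p
    calc ∫ ω, g p ω ∂μ ≤ |∫ ω, g p ω ∂μ| := le_abs_self _
      _ ≤ ∫ ω, |g p ω| ∂μ := by
          simpa [Real.norm_eq_abs] using norm_integral_le_integral_norm (μ := μ) (g p)
      _ ≤ ∫ (_ : Ω), (1:ℝ) ∂μ := by
          refine integral_mono_of_nonneg (Filter.Eventually.of_forall fun ω => abs_nonneg _)
            (integrable_const 1) ?_
          filter_upwards [hgbdd p] with ω h using h
      _ = 1 := by simp
  -- split good/bad
  have split : ∑ p : κ×κ×κ×κ, ∫ ω, g p ω ∂μ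
      = ∑ p ∈ Finset.univ.filter Good, ∫ ω, g p ω ∂μ := by
    rw [← Finset.sum_filter_add_sum_filter_not Finset.univ Good]
    have : ∑ p ∈ Finset.univ.filter (fun p => ¬ Good p), ∫ ω, g p ω ∂μ = 0 := by
      refine Finset.sum_eq_zero fun p hp => ?_
      exact hzero' p (Finset.mem_filter.mp hp).2
    rw [this, add_zero]
  rw [split]
  have cardbound : (Finset.univ.filter Good).card ≤ 3 * (Fintype.card κ)^2 := by
    have hsub : Finset.univ.filter Good ⊆
        (Finset.univ.filter (fun p : κ×κ×κ×κ => p.1 = p.2.1 ∧ p.2.2.1 = p.2.2.2)) ∪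
        (Finset.univ.filter (fun p : κ×κ×κ×κ => p.1 = p.2.2.1 ∧ p.2.1 = p.2.2.2)) ∪
        (Finset.univ.filter (fun p : κ×κ×κ×κ => p.1 = p.2.2.2 ∧ p.2.1 = p.2.2.1)) := by
      intro p hp
      rcases (Finset.mem_filter.mp hp).2 with h | h | h <;>
        simp [Finset.mem_union, h]
    have c1 : ∀ (P : κ×κ×κ×κ → κ×κ) (s : Finset (κ×κ×κ×κ)),
        Set.InjOn P s → s.card ≤ (Fintype.card κ)^2 := by
      intro P s hinj
      calc s.card ≤ (Finset.univ : Finset (κ×κ)).card :=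
            Finset.card_le_card_of_injOn P (fun _ _ => Finset.mem_univ _) hinj
        _ = (Fintype.card κ)^2 := by simp [Finset.card_univ, Fintype.card_prod, sq]
    have h1 : (Finset.univ.filter
        (fun p : κ×κ×κ×κ => p.1 = p.2.1 ∧ p.2.2.1 = p.2.2.2)).card ≤ (Fintype.card κ)^2 := by
      refine c1 (fun p => (p.1, p.2.2.1)) _ ?_
      rintro ⟨a,b,c,d⟩ hp ⟨a',b',c',d'⟩ hq h
      simp only [Finset.coe_filter, Set.mem_setOf_eq, Finset.mem_univ, true_and] at hp hq
      simp only [Prod.mk.injEq] at h ⊢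
      refine ⟨h.1, ?_, h.2, ?_⟩
      · rw [← hp.1, ← hq.1]; exact h.1
      · rw [← hp.2, ← hq.2]; exact h.2
    have h2 : (Finset.univ.filter
        (fun p : κ×κ×κ×κ => p.1 = p.2.2.1 ∧ p.2.1 = p.2.2.2)).card ≤ (Fintype.card κ)^2 := by
      refine c1 (fun p => (p.1, p.2.1)) _ ?_
      rintro ⟨a,b,c,d⟩ hp ⟨a',b',c',d'⟩ hq h
      simp only [Finset.coe_filter, Set.mem_setOf_eq, Finset.mem_univ, true_and] at hp hq
      simp only [Prod.mk.injEq] at h ⊢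
      refine ⟨h.1, h.2, ?_, ?_⟩
      · rw [← hp.1, ← hq.1]; exact h.1
      · rw [← hp.2, ← hq.2]; exact h.2
    have h3 : (Finset.univ.filter
        (fun p : κ×κ×κ×κ => p.1 = p.2.2.2 ∧ p.2.1 = p.2.2.1)).card ≤ (Fintype.card κ)^2 := by
      refine c1 (fun p => (p.1, p.2.1)) _ ?_
      rintro ⟨a,b,c,d⟩ hp ⟨a',b',c',d'⟩ hq h
      simp only [Finset.coe_filter, Set.mem_setOf_eq, Finset.mem_univ, true_and] at hp hq
      simp only [Prod.mk.injEq] at h ⊢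
      refine ⟨h.1, h.2, ?_, ?_⟩
      · rw [← hp.2, ← hq.2]; exact h.2
      · rw [← hp.1, ← hq.1]; exact h.1
    calc (Finset.univ.filter Good).card ≤ _ := Finset.card_le_card hsub
      _ ≤ _ + _ := Finset.card_union_le _ _
      _ ≤ (_ + _) + _ := add_le_add_left (Finset.card_union_le _ _) _
      _ ≤ (Fintype.card κ)^2 + (Fintype.card κ)^2 + (Fintype.card κ)^2 := by
          gcongr
      _ = 3 * (Fintype.card κ)^2 := by ring
  calc ∑ p ∈ Finset.univ.filter Good, ∫ ω, g p ω ∂μ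
      ≤ ∑ p ∈ Finset.univ.filter Good, (1:ℝ) := Finset.sum_le_sum fun p _ => hle1 p
    _ = ((Finset.univ.filter Good).card : ℝ) := by simp
    _ ≤ ((3 * (Fintype.card κ)^2 : ℕ) : ℝ) := by exact_mod_cast cardbound
    _ = 3 * (Fintype.card κ : ℝ)^2 := by push_cast; ring

/-- There is a universal constant `C` such that for any independent mean-zero random
variables `u_{ijt}` bounded by 1 in absolute value, the cross term
`S = Σ_{i,j,t} (Σ_{i'} u_{i'jt})(Σ_{j'} u_{ij't})` satisfies `E[S²] ≤ C·N⁴T²`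
(hence `S = O_P(N²T)`). -/
theorem cross_term_second_moment_bound :
    ∃ C : ℝ, 0 < C ∧
      ∀ (N T : ℕ) (Ω : Type) (_ : MeasureSpace Ω),
        IsProbabilityMeasure (volume : Measure Ω) →
        ∀ (u : Fin N → Fin N → Fin T → Ω → ℝ),
          (∀ i j t, Measurable (u i j t)) →
          iIndepFun
            (fun p : Fin N × Fin N × Fin T => u p.1 p.2.1 p.2.2) volume →
          (∀ i j t, ∫ ω, u i j t ω = 0) →
          (∀ i j t, ∀ᵐ ω ∂(volume : Measure Ω), |u i j t ω| ≤ 1) →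
          (∫ ω, (∑ i, ∑ j, ∑ t,
              (∑ i', u i' j t ω) * (∑ j', u i j' t ω)) ^ 2)
            ≤ C * (N : ℝ) ^ 4 * (T : ℝ) ^ 2 := by
  classical
  refine ⟨3, by norm_num, ?_⟩
  intro N T Ω _ hprob u hmeas hindep hzero hbdd
  set μ : Measure Ω := volume with hμ
  set V : Fin T → Ω → ℝ := fun t ω => ∑ i, ∑ j, u i j t ω with hV
  have hVmeas : ∀ t, Measurable (V t) := by
    intro t
    exact Finset.measurable_sum _ fun i _ => Finset.measurable_sum _ fun j _ => hmeas i j t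
  -- rewrite the integrand: S ω = ∑ t, (V t ω)^2
  have hSrw : ∀ ω, (∑ i, ∑ j, ∑ t,
      (∑ i', u i' j t ω) * (∑ j', u i j' t ω)) = ∑ t, (V t ω)^2 := by
    intro ω
    have swap : ∀ (F : Fin N → Fin N → Fin T → ℝ),
        ∑ i, ∑ j, ∑ t, F i j t = ∑ t, ∑ i, ∑ j, F i j t := by
      intro F
      calc ∑ i, ∑ j, ∑ t, F i j t = ∑ i, ∑ t, ∑ j, F i j t :=
            Finset.sum_congr rfl fun i _ => Finset.sum_comm
        _ = ∑ t, ∑ i, ∑ j, F i j t := Finset.sum_comm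
    rw [swap]
    refine Finset.sum_congr rfl fun t _ => ?_
    have : ∑ i, ∑ j, (∑ i', u i' j t ω) * (∑ j', u i j' t ω)
        = (∑ j, ∑ i', u i' j t ω) * (∑ i, ∑ j', u i j' t ω) := by
      rw [Finset.sum_mul_sum]
      exact Finset.sum_comm
    rw [this]
    have e1 : (∑ j, ∑ i', u i' j t ω) = V t ω := Finset.sum_comm
    rw [e1, sq]
  -- fourth moment bound for each V t
  have hV4 : ∀ t : Fin T, ∫ ω, (V t ω)^4 ∂μ ≤ 3 * ((N : ℝ)^2)^2 := by
    intro t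
    have key : ∫ ω, (∑ p : Fin N × Fin N, u p.1 p.2 t ω)^4 ∂μ
        ≤ 3 * (Fintype.card (Fin N × Fin N) : ℝ)^2 := by
      refine fourth_moment (f := fun p : Fin N × Fin N => u p.1 p.2 t)
        (fun p => hmeas p.1 p.2 t) (fun p => hbdd p.1 p.2 t) ?_
      intro a b c d hab hac had
      exact indep_prod4_zero (f := fun q : Fin N × Fin N × Fin T => u q.1 q.2.1 q.2.2)
        (fun q => hmeas q.1 q.2.1 q.2.2) hindep (fun q => hzero q.1 q.2.1 q.2.2)
        (fun q => hbdd q.1 q.2.1 q.2.2)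
        (a := (a.1, a.2, t)) (b := (b.1, b.2, t)) (c := (c.1, c.2, t)) (d := (d.1, d.2, t))
        (by simpa [Prod.ext_iff] using fun h1 h2 => hab (Prod.ext h1 h2))
        (by simpa [Prod.ext_iff] using fun h1 h2 => hac (Prod.ext h1 h2))
        (by simpa [Prod.ext_iff] using fun h1 h2 => had (Prod.ext h1 h2))
    have e : (fun ω => (V t ω)^4) = fun ω => (∑ p : Fin N × Fin N, u p.1 p.2 t ω)^4 := by
      funext ω
      simp [hV, Fintype.sum_prod_type]
    rw [e]
    calc ∫ ω, (∑ p : Fin N × Fin N, u p.1 p.2 t ω)^4 ∂μ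
        ≤ 3 * (Fintype.card (Fin N × Fin N) : ℝ)^2 := key
      _ = 3 * ((N : ℝ)^2)^2 := by simp [Fintype.card_prod]; ring
  -- integrability of V^4
  have hVbdd : ∀ t, ∀ᵐ ω ∂μ, |V t ω| ≤ (N : ℝ)^2 := by
    intro t
    have h : ∀ᵐ ω ∂μ, ∀ (i : Fin N) (j : Fin N), |u i j t ω| ≤ 1 :=
      ae_all_iff.2 fun i => ae_all_iff.2 fun j => hbdd i j t
    filter_upwards [h] with ω hω
    calc |V t ω| ≤ ∑ i, |∑ j, u i j t ω| := Finset.abs_sum_le_sum_abs _ _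
      _ ≤ ∑ i, ∑ j, |u i j t ω| :=
          Finset.sum_le_sum fun i _ => Finset.abs_sum_le_sum_abs _ _
      _ ≤ ∑ _i : Fin N, ∑ _j : Fin N, (1:ℝ) :=
          Finset.sum_le_sum fun i _ => Finset.sum_le_sum fun j _ => hω i j
      _ = (N:ℝ)^2 := by simp [sq]
  have hV4int : ∀ t : Fin T, Integrable (fun ω => (V t ω)^4) μ := by
    intro t
    refine bdd_integrable (c := ((N:ℝ)^2)^4) ((hVmeas t).pow_const 4) ?_
    filter_upwards [hVbdd t] with ω h
    calc |V t ω ^ 4| = |V t ω| ^ 4 := abs_pow _ _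
      _ ≤ ((N:ℝ)^2)^4 := pow_le_pow_left₀ (abs_nonneg _) h 4
  -- main chain
  have step1 : ∫ ω, (∑ i, ∑ j, ∑ t,
      (∑ i', u i' j t ω) * (∑ j', u i j' t ω)) ^ 2 ∂μ
      ≤ ∫ ω, (T : ℝ) * ∑ t, (V t ω)^4 ∂μ := by
    refine integral_mono_of_nonneg (Filter.Eventually.of_forall fun ω => sq_nonneg _)
      ((integrable_finset_sum _ (fun t _ => hV4int t)).const_mul _) ?_
    refine Filter.Eventually.of_forall fun ω => ?_
    show (∑ i, ∑ j, ∑ t, (∑ i', u i' j t ω) * (∑ j', u i j' t ω))^2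
      ≤ (T : ℝ) * ∑ t, (V t ω)^4
    rw [hSrw ω]
    calc (∑ t, (V t ω)^2)^2 ≤ (Finset.univ.card : ℝ) * ∑ t, ((V t ω)^2)^2 :=
          sq_sum_le_card_mul_sum_sq
      _ = (T : ℝ) * ∑ t, (V t ω)^4 := by
          simp only [Finset.card_univ, Fintype.card_fin]
          congr 1
          exact Finset.sum_congr rfl fun t _ => by ring
  have step2 : ∫ ω, (T : ℝ) * ∑ t, (V t ω)^4 ∂μ = (T : ℝ) * ∑ t, ∫ ω, (V t ω)^4 ∂μ := by
    rw [integral_const_mul, integral_finset_sum _ (fun t _ => hV4int t)]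
  calc ∫ ω, (∑ i, ∑ j, ∑ t, (∑ i', u i' j t ω) * (∑ j', u i j' t ω)) ^ 2 ∂μ
      ≤ ∫ ω, (T : ℝ) * ∑ t, (V t ω)^4 ∂μ := step1
    _ = (T : ℝ) * ∑ t, ∫ ω, (V t ω)^4 ∂μ := step2
    _ ≤ (T : ℝ) * ∑ _t : Fin T, 3 * ((N : ℝ)^2)^2 := by
        refine mul_le_mul_of_nonneg_left (Finset.sum_le_sum fun t _ => hV4 t) (by positivity)
    _ = 3 * (N : ℝ) ^ 4 * (T : ℝ) ^ 2 := by
        simp [Finset.sum_const, Finset.card_univ]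
        ring
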